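/- For integers n ≥ 2 and 1 ≤ k ≤ n-1, the cardinality of S₂(n,k) equals the cardinality of T₂(n+k-1,k). -/

import Mathlib

open Finset

def Laminar (S : Finset (Finset ℕ)) : Prop :=
  ∀ A ∈ S, ∀ B ∈ S, A ⊆ B ∨ B ⊆ A ∨ Disjoint A B

open scoped Classical in
noncomputable def nestedF (s : Finset ℕ) (k : ℕ) : Finset (Finset (Finset ℕ)) :=
  (s.powerset.powerset).filter
    (fun S => S.card = k ∧ s ∈ S ∧ (∀ A ∈ S, 2 ≤ A.card) ∧ Laminar S)

open scoped Classical in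
noncomputable def partF (s : Finset ℕ) (k : ℕ) : Finset (Finset (Finset ℕ)) :=
  (s.powerset.powerset).filter
    (fun P => P.card = k ∧ (∀ A ∈ P, 2 ≤ A.card) ∧
      (∀ A ∈ P, ∀ B ∈ P, A ≠ B → Disjoint A B) ∧ P.biUnion id = s)

lemma mem_nestedF {s : Finset ℕ} {k : ℕ} {S : Finset (Finset ℕ)} :
    S ∈ nestedF s k ↔ (∀ A ∈ S, A ⊆ s) ∧ S.card = k ∧ s ∈ S ∧
      (∀ A ∈ S, 2 ≤ A.card) ∧ Laminar S := by
  classical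
  simp [nestedF, Finset.mem_powerset, Finset.subset_iff]

lemma mem_partF {s : Finset ℕ} {k : ℕ} {P : Finset (Finset ℕ)} :
    P ∈ partF s k ↔ (∀ A ∈ P, A ⊆ s) ∧ P.card = k ∧ (∀ A ∈ P, 2 ≤ A.card) ∧
      (∀ A ∈ P, ∀ B ∈ P, A ≠ B → Disjoint A B) ∧ P.biUnion id = s := by
  classical
  simp [partF, Finset.mem_powerset, Finset.subset_iff]

/-- A laminar family of sets of size ≥ 2 contained in `s` has at most `s.card - 1` members. -/

lemma laminar_aux : ∀ N : ℕ, ∀ (F : Finset (Finset ℕ)) (s : Finset ℕ), F.card ≤ N →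
    (∀ A ∈ F, A ⊆ s) → (∀ A ∈ F, 2 ≤ A.card) → Laminar F → F.Nonempty →
    F.card + 1 ≤ s.card := by
  intro N
  induction N with
  | zero => intro F s hc _ _ _ hne; simp [Finset.card_eq_zero] at hc; subst hc; exact absurd hne (by simp)
  | succ N IH =>
    intro F s hc hsub h2 hlam hne
    obtain ⟨A, hA, hmin⟩ := Finset.exists_min_image F Finset.card hne
    have hA2 : 2 ≤ A.card := h2 A hA
    obtain ⟨x, hx, y, hy, hxy⟩ := Finset.one_lt_card.1 hA2
    have hys : y ∈ s := hsub A hA hy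
    set F' := (F.erase A).image (fun B => B.erase y) with hF'
    have key : ∀ B ∈ F.erase A, y ∈ B → A ⊆ B := by
      intro B hB hyB
      have hBF := Finset.mem_of_mem_erase hB
      have hne' := Finset.ne_of_mem_erase hB
      rcases hlam A hA B hBF with h | h | h
      · exact h
      · have : B ⊂ A := h.ssubset_of_ne hne'
        have := Finset.card_lt_card this
        have := hmin B hBF
        omega
      · exact absurd hyB (Finset.disjoint_left.1 h hy)
    have hinj : Set.InjOn (fun B : Finset ℕ => B.erase y) ↑(F.erase A) := by
      intro B hB C hC hBC
      simp only at hBC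
      by_cases hyB : y ∈ B <;> by_cases hyC : y ∈ C
      · ext z; by_cases hz : z = y
        · simp [hz, hyB, hyC]
        · constructor
          · intro h; have : z ∈ B.erase y := Finset.mem_erase.2 ⟨hz, h⟩
            rw [hBC] at this; exact Finset.mem_of_mem_erase this
          · intro h; have : z ∈ C.erase y := Finset.mem_erase.2 ⟨hz, h⟩
            rw [← hBC] at this; exact Finset.mem_of_mem_erase this
      · exfalso
        have hAB := key B hB hyB
        have hxC : x ∈ C := by
          have : x ∈ B.erase y := Finset.mem_erase.2 ⟨hxy, hAB hx⟩
          rw [hBC] at this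
          exact Finset.mem_of_mem_erase this
        have hCF := Finset.mem_of_mem_erase hC
        rcases hlam A hA C hCF with h | h | h
        · exact hyC (h hy)
        · have hne2 : C ≠ A := by
            intro h'; exact hyC (h' ▸ hy)
          have : C ⊂ A := h.ssubset_of_ne hne2
          have := Finset.card_lt_card this
          have := hmin C hCF
          omega
        · exact absurd hxC (Finset.disjoint_left.1 h hx)
      · exfalso
        have hAC := key C hC hyC
        have hxB : x ∈ B := by
          have : x ∈ C.erase y := Finset.mem_erase.2 ⟨hxy, hAC hx⟩
          rw [← hBC] at this
          exact Finset.mem_of_mem_erase this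
        have hBF := Finset.mem_of_mem_erase hB
        rcases hlam A hA B hBF with h | h | h
        · exact hyB (h hy)
        · have hne2 : B ≠ A := Finset.ne_of_mem_erase hB
          have : B ⊂ A := h.ssubset_of_ne hne2
          have := Finset.card_lt_card this
          have := hmin B hBF
          omega
        · exact absurd hxB (Finset.disjoint_left.1 h hx)
      · ext z
        constructor
        · intro h
          have hzy : z ≠ y := fun h' => hyB (h' ▸ h)
          have : z ∈ B.erase y := Finset.mem_erase.2 ⟨hzy, h⟩
          rw [hBC] at this; exact Finset.mem_of_mem_erase this
        · intro h
          have hzy : z ≠ y := fun h' => hyC (h' ▸ h)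
          have : z ∈ C.erase y := Finset.mem_erase.2 ⟨hzy, h⟩
          rw [← hBC] at this; exact Finset.mem_of_mem_erase this
    have hcard' : F'.card = F.card - 1 := by
      rw [hF', Finset.card_image_of_injOn hinj, Finset.card_erase_of_mem hA]
    rcases Finset.eq_empty_or_nonempty F' with hemp | hne'
    · have herase : F.erase A = ∅ := by
        by_contra h
        obtain ⟨B, hB⟩ := Finset.nonempty_of_ne_empty h
        have : B.erase y ∈ F' := Finset.mem_image_of_mem _ hB
        rw [hemp] at this; simp at this
      have hF1 : F = {A} := by
        ext B; constructor
        · intro hB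
          by_cases h' : B = A
          · simp [h']
          · exfalso; have hmem : B ∈ F.erase A := Finset.mem_erase.2 ⟨h', hB⟩
            rw [herase] at hmem; simp at hmem
        · intro hB; simp at hB; exact hB ▸ hA
      rw [hF1]
      have := Finset.card_le_card (hsub A hA)
      simp; omega
    · have IH' := IH F' (s.erase y) (by omega)
        (by
          intro A' hA'
          rw [hF'] at hA'
          obtain ⟨B, hB, rfl⟩ := Finset.mem_image.1 hA'
          exact fun z hz => Finset.mem_erase.2 ⟨(Finset.mem_erase.1 hz).1,
            hsub B (Finset.mem_of_mem_erase hB) (Finset.mem_of_mem_erase hz)⟩)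
        (by
          intro A' hA'
          rw [hF'] at hA'
          obtain ⟨B, hB, rfl⟩ := Finset.mem_image.1 hA'
          by_cases hyB : y ∈ B
          · have hAB := key B hB hyB
            have : A ⊂ B := hAB.ssubset_of_ne (Ne.symm (Finset.ne_of_mem_erase hB))
            have := Finset.card_lt_card this
            rw [Finset.card_erase_of_mem hyB]
            omega
          · rw [Finset.erase_eq_of_notMem hyB]
            exact h2 B (Finset.mem_of_mem_erase hB))
        (by
          intro A' hA' B' hB'
          rw [hF'] at hA' hB'
          obtain ⟨B, hB, rfl⟩ := Finset.mem_image.1 hA'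
          obtain ⟨C, hC, rfl⟩ := Finset.mem_image.1 hB'
          rcases hlam B (Finset.mem_of_mem_erase hB) C (Finset.mem_of_mem_erase hC) with h | h | h
          · exact Or.inl (Finset.erase_subset_erase y h)
          · exact Or.inr (Or.inl (Finset.erase_subset_erase y h))
          · exact Or.inr (Or.inr (h.mono (Finset.erase_subset y B) (Finset.erase_subset y C))))
        hne'
      rw [Finset.card_erase_of_mem hys] at IH'
      have hs1 : 1 ≤ s.card := Finset.card_pos.2 ⟨y, hys⟩
      have hF1 : 1 ≤ F.card := Finset.card_pos.2 hne
      omega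

lemma laminar_card_bound (F : Finset (Finset ℕ)) (s : Finset ℕ)
    (h1 : ∀ A ∈ F, A ⊆ s) (h2 : ∀ A ∈ F, 2 ≤ A.card) (h3 : Laminar F) (h4 : F.Nonempty) :
    F.card + 1 ≤ s.card :=
  laminar_aux F.card F s le_rfl h1 h2 h3 h4

lemma part_card_bound {s : Finset ℕ} {k : ℕ} {P : Finset (Finset ℕ)}
    (h : P ∈ partF s k) : 2 * k ≤ s.card := by
  rw [mem_partF] at h
  obtain ⟨hsub, hcard, h2, hdisj, hbi⟩ := h
  have : s.card = ∑ A ∈ P, A.card := by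
    rw [← hbi, Finset.card_biUnion]
    · rfl
    · exact fun x hx y hy hxy => hdisj x hx y hy hxy
  rw [this, ← hcard]
  calc 2 * P.card = ∑ _A ∈ P, 2 := by rw [Finset.sum_const, smul_eq_mul, mul_comm]
  _ ≤ ∑ A ∈ P, A.card := Finset.sum_le_sum h2

lemma nestedF_base {n : ℕ} (hn : 2 ≤ n) : nestedF (Icc 1 n) 1 = {{Icc 1 n}} := by
  ext S
  rw [mem_nestedF, Finset.mem_singleton]
  constructor
  · rintro ⟨_, hcard, htop, _, _⟩
    obtain ⟨a, ha⟩ := Finset.card_eq_one.1 hcard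
    rw [ha] at htop ⊢
    rw [Finset.mem_singleton] at htop
    rw [htop]
  · rintro rfl
    refine ⟨?_, Finset.card_singleton _, Finset.mem_singleton_self _, ?_, ?_⟩
    · intro A hA; rw [Finset.mem_singleton] at hA; subst hA; rfl
    · intro A hA; rw [Finset.mem_singleton] at hA; subst hA
      rw [Nat.card_Icc]; omega
    · intro A hA B hB
      rw [Finset.mem_singleton] at hA hB; subst hA; subst hB; exact Or.inl le_rfl

lemma partF_base {m : ℕ} (hm : 2 ≤ m) : partF (Icc 1 m) 1 = {{Icc 1 m}} := by
  ext P
  rw [mem_partF, Finset.mem_singleton]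
  constructor
  · rintro ⟨_, hcard, _, _, hbi⟩
    obtain ⟨a, ha⟩ := Finset.card_eq_one.1 hcard
    subst ha
    rw [Finset.singleton_biUnion, id] at hbi
    rw [hbi]
  · rintro rfl
    refine ⟨?_, Finset.card_singleton _, ?_, ?_, ?_⟩
    · intro A hA; rw [Finset.mem_singleton] at hA; subst hA; rfl
    · intro A hA; rw [Finset.mem_singleton] at hA; subst hA
      rw [Nat.card_Icc]; omega
    · intro A hA B hB hne
      rw [Finset.mem_singleton] at hA hB; subst hA; subst hB; exact absurd rfl hne
    · rw [Finset.singleton_biUnion]; rfl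

lemma image_inj_sub {f : ℕ → ℕ} {s A B : Finset ℕ} (hf : Set.InjOn f ↑s)
    (hA : A ⊆ s) (hB : B ⊆ s) (h : A.image f = B.image f) : A = B := by
  ext x
  constructor
  · intro hx
    have : f x ∈ B.image f := h ▸ Finset.mem_image_of_mem f hx
    obtain ⟨y, hy, hxy⟩ := Finset.mem_image.1 this
    rwa [← hf (hB hy) (hA hx) hxy]
  · intro hx
    have : f x ∈ A.image f := h.symm ▸ Finset.mem_image_of_mem f hx
    obtain ⟨y, hy, hxy⟩ := Finset.mem_image.1 this
    rwa [← hf (hA hy) (hB hx) hxy]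

lemma partF_invariance (s : Finset ℕ) (k : ℕ) (f : ℕ → ℕ) (hf : Set.InjOn f ↑s) :
    (partF (s.image f) k).card = (partF s k).card := by
  classical
  symm
  apply Finset.card_bij (fun P _ => P.image (Finset.image f))
  · -- maps into
    intro P hP
    rw [mem_partF] at hP ⊢
    obtain ⟨hsub, hcard, h2, hdisj, hbi⟩ := hP
    refine ⟨?_, ?_, ?_, ?_, ?_⟩
    · intro A hA
      obtain ⟨B, hB, rfl⟩ := Finset.mem_image.1 hA
      exact Finset.image_subset_image (hsub B hB)
    · rw [Finset.card_image_of_injOn, hcard]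
      intro A hA B hB h
      exact image_inj_sub hf (hsub A hA) (hsub B hB) h
    · intro A hA
      obtain ⟨B, hB, rfl⟩ := Finset.mem_image.1 hA
      rw [Finset.card_image_of_injOn (hf.mono (by exact_mod_cast hsub B hB))]
      exact h2 B hB
    · intro A hA B hB hne
      obtain ⟨A', hA', rfl⟩ := Finset.mem_image.1 hA
      obtain ⟨B', hB', rfl⟩ := Finset.mem_image.1 hB
      have hne' : A' ≠ B' := fun h => hne (h ▸ rfl)
      rw [Finset.disjoint_left]
      intro z hz1 hz2
      obtain ⟨a, ha, rfl⟩ := Finset.mem_image.1 hz1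
      obtain ⟨b, hb, hab⟩ := Finset.mem_image.1 hz2
      have : b = a := hf (hsub B' hB' hb) (hsub A' hA' ha) hab
      subst this
      exact Finset.disjoint_left.1 (hdisj A' hA' B' hB' hne') ha hb
    · ext z
      simp only [Finset.mem_biUnion, Finset.mem_image, id]
      constructor
      · rintro ⟨A, ⟨B, hB, rfl⟩, hz⟩
        obtain ⟨x, hxB, rfl⟩ := Finset.mem_image.1 hz
        exact ⟨x, hsub B hB hxB, rfl⟩
      · rintro ⟨x, hxs, rfl⟩
        rw [← hbi] at hxs
        obtain ⟨B, hB, hxB⟩ := Finset.mem_biUnion.1 hxs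
        exact ⟨B.image f, ⟨B, hB, rfl⟩, Finset.mem_image_of_mem f hxB⟩
  · -- inj on
    intro P1 h1 P2 h2 h
    rw [mem_partF] at h1 h2
    ext A
    constructor
    · intro hA
      have : A.image f ∈ P2.image (Finset.image f) := h ▸ Finset.mem_image_of_mem _ hA
      obtain ⟨B, hB, hBA⟩ := Finset.mem_image.1 this
      rwa [image_inj_sub hf (h2.1 B hB) (h1.1 A hA) hBA] at hB
    · intro hA
      have : A.image f ∈ P1.image (Finset.image f) := h.symm ▸ Finset.mem_image_of_mem _ hA
      obtain ⟨B, hB, hBA⟩ := Finset.mem_image.1 this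
      rwa [image_inj_sub hf (h1.1 B hB) (h2.1 A hA) hBA] at hB
  · -- surjective
    intro Q hQ
    rw [mem_partF] at hQ
    obtain ⟨hsub, hcard, h2, hdisj, hbi⟩ := hQ
    set g : Finset ℕ → Finset ℕ := fun B => s.filter (fun x => f x ∈ B) with hg
    have himg : ∀ B ∈ Q, (g B).image f = B := by
      intro B hB
      ext b
      constructor
      · intro hb
        obtain ⟨x, hx, rfl⟩ := Finset.mem_image.1 hb
        exact (Finset.mem_filter.1 hx).2
      · intro hb
        have : b ∈ s.image f := hsub B hB hb
        obtain ⟨x, hx, rfl⟩ := Finset.mem_image.1 this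
        exact Finset.mem_image_of_mem f (Finset.mem_filter.2 ⟨hx, hb⟩)
    have hginj : ∀ B ∈ Q, ∀ C ∈ Q, g B = g C → B = C := by
      intro B hB C hC h
      rw [← himg B hB, ← himg C hC, h]
    refine ⟨Q.image g, ?_, ?_⟩
    · rw [mem_partF]
      refine ⟨?_, ?_, ?_, ?_, ?_⟩
      · intro A hA
        obtain ⟨B, hB, rfl⟩ := Finset.mem_image.1 hA
        exact Finset.filter_subset _ _
      · rw [Finset.card_image_of_injOn, hcard]
        intro B hB C hC h
        exact hginj B hB C hC h
      · intro A hA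
        obtain ⟨B, hB, rfl⟩ := Finset.mem_image.1 hA
        have : ((g B).image f).card = B.card := by rw [himg B hB]
        have hle : ((g B).image f).card ≤ (g B).card := Finset.card_image_le
        have := h2 B hB
        omega
      · intro A hA B hB hne
        obtain ⟨A', hA', rfl⟩ := Finset.mem_image.1 hA
        obtain ⟨B', hB', rfl⟩ := Finset.mem_image.1 hB
        have hne' : A' ≠ B' := fun h => hne (h ▸ rfl)
        rw [Finset.disjoint_left]
        intro x hx1 hx2
        have h1 := (Finset.mem_filter.1 hx1).2
        have h2' := (Finset.mem_filter.1 hx2).2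
        exact Finset.disjoint_left.1 (hdisj A' hA' B' hB' hne') h1 h2'
      · ext x
        simp only [Finset.mem_biUnion, Finset.mem_image, id]
        constructor
        · rintro ⟨A, ⟨B, hB, rfl⟩, hx⟩
          exact (Finset.mem_filter.1 hx).1
        · intro hx
          have : f x ∈ Q.biUnion id := by rw [hbi]; exact Finset.mem_image_of_mem f hx
          obtain ⟨B, hB, hfx⟩ := Finset.mem_biUnion.1 this
          exact ⟨g B, ⟨B, hB, rfl⟩, Finset.mem_filter.2 ⟨hx, hfx⟩⟩
    · rw [Finset.image_image]
      have : ∀ B ∈ Q, (Finset.image f ∘ g) B = id B := fun B hB => himg B hB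
      rw [Finset.image_congr this, Finset.image_id]

section Pairs
variable {α β : Type*} [DecidableEq α] [DecidableEq β]

noncomputable def pairs (F : Finset α) (t : α → Finset β) : Finset (α × β) :=
  F.biUnion (fun P => (t P).image (fun b => (P, b)))

lemma mem_pairs {F : Finset α} {t : α → Finset β} {q : α × β} :
    q ∈ pairs F t ↔ q.1 ∈ F ∧ q.2 ∈ t q.1 := by
  unfold pairs
  rw [Finset.mem_biUnion]
  constructor
  · rintro ⟨P, hP, hq⟩
    obtain ⟨b, hb, rfl⟩ := Finset.mem_image.1 hq
    exact ⟨hP, hb⟩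
  · rintro ⟨h1, h2⟩
    exact ⟨q.1, h1, Finset.mem_image.2 ⟨q.2, h2, rfl⟩⟩

lemma card_pairs (F : Finset α) (t : α → Finset β) :
    (pairs F t).card = ∑ P ∈ F, (t P).card := by
  unfold pairs
  rw [Finset.card_biUnion]
  · exact Finset.sum_congr rfl (fun P _ => Finset.card_image_of_injective _
      (fun a b h => by injection h))
  · intro P hP Q hQ hPQ
    rw [Function.onFun, Finset.disjoint_left]
    rintro q hq1 hq2
    obtain ⟨b, _, rfl⟩ := Finset.mem_image.1 hq1
    obtain ⟨c, _, h⟩ := Finset.mem_image.1 hq2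
    exact hPQ (by injection h with h1 h2; exact h1.symm)

end Pairs

noncomputable def blockAt (v : ℕ) (P : Finset (Finset ℕ)) : Finset ℕ :=
  if h : ∃ A, A ∈ P ∧ v ∈ A then h.choose else ∅

lemma blockAt_mem {v : ℕ} {P : Finset (Finset ℕ)} (h : ∃ A, A ∈ P ∧ v ∈ A) :
    blockAt v P ∈ P ∧ v ∈ blockAt v P := by
  rw [blockAt, dif_pos h]
  exact ⟨h.choose_spec.1, h.choose_spec.2⟩

lemma blockAt_eq {v : ℕ} {P : Finset (Finset ℕ)} {A : Finset ℕ}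
    (hdisj : ∀ A ∈ P, ∀ B ∈ P, A ≠ B → Disjoint A B)
    (hA : A ∈ P) (hv : v ∈ A) : blockAt v P = A := by
  have h : ∃ A, A ∈ P ∧ v ∈ A := ⟨A, hA, hv⟩
  obtain ⟨h1, h2⟩ := blockAt_mem h
  by_contra hne
  exact Finset.disjoint_left.1 (hdisj _ h1 _ hA hne) h2 hv

noncomputable def minAt (v : ℕ) (S : Finset (Finset ℕ)) : Finset ℕ :=
  if h : ∃ A, A ∈ S ∧ v ∈ A ∧ ∀ B ∈ S, v ∈ B → A ⊆ B then h.choose else ∅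

lemma minAt_eq {v : ℕ} {S : Finset (Finset ℕ)} {A : Finset ℕ}
    (hA : A ∈ S) (hv : v ∈ A) (hmin : ∀ B ∈ S, v ∈ B → A ⊆ B) : minAt v S = A := by
  have h : ∃ A, A ∈ S ∧ v ∈ A ∧ ∀ B ∈ S, v ∈ B → A ⊆ B := ⟨A, hA, hv, hmin⟩
  rw [minAt, dif_pos h]
  exact Finset.Subset.antisymm (h.choose_spec.2.2 A hA hv) (hmin _ h.choose_spec.1 h.choose_spec.2.1)

lemma minAt_spec {v : ℕ} {S : Finset (Finset ℕ)} (hlam : Laminar S) {T : Finset ℕ}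
    (hT : T ∈ S) (hv : v ∈ T) :
    minAt v S ∈ S ∧ v ∈ minAt v S ∧ ∀ B ∈ S, v ∈ B → minAt v S ⊆ B := by
  classical
  have hne : (S.filter (fun A => v ∈ A)).Nonempty := ⟨T, Finset.mem_filter.2 ⟨hT, hv⟩⟩
  obtain ⟨A, hA, hmin⟩ := Finset.exists_min_image _ Finset.card hne
  rw [Finset.mem_filter] at hA
  have hAmin : ∀ B ∈ S, v ∈ B → A ⊆ B := by
    intro B hB hvB
    rcases hlam A hA.1 B hB with h | h | h
    · exact h
    · have hle := hmin B (Finset.mem_filter.2 ⟨hB, hvB⟩)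
      rw [Finset.eq_of_subset_of_card_le h hle]
    · exact absurd hvB (Finset.disjoint_left.1 h hA.2)
  rw [minAt_eq hA.1 hA.2 hAmin]
  exact ⟨hA.1, hA.2, hAmin⟩

def pick (s : Finset ℕ) : ℕ := s.max.getD 0

lemma pick_eq {s : Finset ℕ} {b : ℕ} (h : s = {b}) : pick s = b := by
  subst h; rfl

lemma relabel_injOn {m b : ℕ} :
    Set.InjOn (fun x => if x < b then x else x - 1) ↑((Icc 1 m).erase b) := by
  intro x hx y hy hxy
  simp only [Finset.coe_erase, Set.mem_diff, Finset.mem_coe, Finset.mem_Icc,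
    Set.mem_singleton_iff] at hx hy
  simp only at hxy
  split_ifs at hxy <;> omega

lemma relabel_image {m b : ℕ} (hb1 : 1 ≤ b) (hb2 : b ≤ m) :
    ((Icc 1 m).erase b).image (fun x => if x < b then x else x - 1) = Icc 1 (m-1) := by
  ext z
  simp only [Finset.mem_image, Finset.mem_erase, Finset.mem_Icc]
  constructor
  · rintro ⟨x, ⟨hxb, hx1, hx2⟩, rfl⟩
    split_ifs <;> omega
  · intro hz
    by_cases h : z < b
    · exact ⟨z, by omega, by simp [h]⟩
    · refine ⟨z + 1, by omega, ?_⟩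
      rw [if_neg (by omega)]
      omega

lemma part_rec (m k : ℕ) (hm : 1 ≤ m) (hk : 1 ≤ k) :
    (partF (Icc 1 (m+1)) k).card =
      k * (partF (Icc 1 m) k).card + m * (partF (Icc 1 (m-1)) (k-1)).card := by
  classical
  set v := m + 1 with hv
  have hvm : v ∉ Icc 1 m := by simp [hv]
  have hsub' : ∀ A : Finset ℕ, A ⊆ Icc 1 (m+1) → v ∉ A → A ⊆ Icc 1 m := by
    intro A hA hvA x hx
    have h1 := hA hx
    rw [Finset.mem_Icc] at h1 ⊢
    have : x ≠ v := fun h => hvA (h ▸ hx)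
    omega
  have hIccSub : Icc 1 m ⊆ Icc 1 (m+1) := Finset.Icc_subset_Icc_right (by omega)
  have hvmem : ∀ P ∈ partF (Icc 1 (m+1)) k, ∃ A, A ∈ P ∧ v ∈ A := by
    intro P hP
    rw [mem_partF] at hP
    have hv2 : v ∈ P.biUnion id := by
      rw [hP.2.2.2.2, Finset.mem_Icc]; omega
    obtain ⟨A, hA, hvA⟩ := Finset.mem_biUnion.1 hv2
    exact ⟨A, hA, hvA⟩
  rw [← Finset.card_filter_add_card_filter_not
    (p := fun P => 3 ≤ (blockAt v P).card) (s := partF (Icc 1 (m+1)) k)]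
  have hA : ((partF (Icc 1 (m+1)) k).filter (fun P => 3 ≤ (blockAt v P).card)).card
      = (pairs (partF (Icc 1 m) k) (fun P => P)).card := by
    apply Finset.card_nbij'
      (i := fun P => (insert ((blockAt v P).erase v) (P.erase (blockAt v P)),
        (blockAt v P).erase v))
      (j := fun q => insert (insert v q.2) (q.1.erase q.2))
    · -- hi
      intro P hP
      rw [Finset.mem_coe, Finset.mem_filter] at hP
      obtain ⟨hPmem, hcond⟩ := hP
      obtain ⟨hB, hvB⟩ := blockAt_mem (hvmem P hPmem)
      set B := blockAt v P with hBdef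
      rw [mem_partF] at hPmem
      obtain ⟨hsub, hcard, h2, hdisj, hbi⟩ := hPmem
      have hnotv : ∀ A ∈ P.erase B, v ∉ A := by
        intro A hA hvA
        exact (Finset.ne_of_mem_erase hA)
          ((blockAt_eq hdisj (Finset.mem_of_mem_erase hA) hvA).symm)
      have hBe : B.erase v ∉ P.erase B := by
        intro hmem
        have hne := Finset.ne_of_mem_erase hmem
        have hdj := hdisj _ (Finset.mem_of_mem_erase hmem) _ hB hne
        obtain ⟨x, hx⟩ : (B.erase v).Nonempty := by
          rw [← Finset.card_pos, Finset.card_erase_of_mem hvB]; omega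
        exact Finset.disjoint_left.1 hdj hx (Finset.mem_of_mem_erase hx)
      rw [Finset.mem_coe, mem_pairs]
      constructor
      · rw [mem_partF]
        refine ⟨?_, ?_, ?_, ?_, ?_⟩
        · intro A hA
          rcases Finset.mem_insert.1 hA with rfl | hA
          · exact hsub' _ ((Finset.erase_subset v B).trans (hsub B hB))
              (Finset.notMem_erase v B)
          · exact hsub' _ (hsub A (Finset.mem_of_mem_erase hA)) (hnotv A hA)
        · rw [Finset.card_insert_of_notMem hBe, Finset.card_erase_of_mem hB]
          omega
        · intro A hA
          rcases Finset.mem_insert.1 hA with rfl | hA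
          · rw [Finset.card_erase_of_mem hvB]; omega
          · exact h2 A (Finset.mem_of_mem_erase hA)
        · intro A hA A' hA' hne
          rcases Finset.mem_insert.1 hA with rfl | hA <;>
            rcases Finset.mem_insert.1 hA' with rfl | hA'
          · exact absurd rfl hne
          · exact ((hdisj _ hB _ (Finset.mem_of_mem_erase hA')
              (Finset.ne_of_mem_erase hA').symm).mono_left (Finset.erase_subset v B))
          · exact ((hdisj _ hB _ (Finset.mem_of_mem_erase hA)
              (Finset.ne_of_mem_erase hA).symm).mono_left (Finset.erase_subset v B)).symm
          · exact hdisj _ (Finset.mem_of_mem_erase hA) _ (Finset.mem_of_mem_erase hA')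
              (fun h => hne h)
        · ext x
          simp only [Finset.mem_biUnion, id]
          constructor
          · rintro ⟨A, hA, hxA⟩
            rcases Finset.mem_insert.1 hA with rfl | hA
            · exact hsub' _ ((Finset.erase_subset v B).trans (hsub B hB))
                (Finset.notMem_erase v B) hxA
            · exact hsub' _ (hsub A (Finset.mem_of_mem_erase hA)) (hnotv A hA) hxA
          · intro hx
            have hx' : x ∈ P.biUnion id := by rw [hbi]; exact hIccSub hx
            obtain ⟨A, hA, hxA⟩ := Finset.mem_biUnion.1 hx'
            by_cases hAB : A = B
            · refine ⟨B.erase v, Finset.mem_insert_self _ _,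
                Finset.mem_erase.2 ⟨?_, hAB ▸ hxA⟩⟩
              intro h; subst h; exact hvm hx
            · exact ⟨A, Finset.mem_insert_of_mem (Finset.mem_erase.2 ⟨hAB, hA⟩), hxA⟩
      · exact Finset.mem_insert_self _ _
    · -- hj
      intro q hq
      rw [Finset.mem_coe, mem_pairs] at hq
      obtain ⟨hP', hC⟩ := hq
      obtain ⟨P', C⟩ := q
      simp only at hP' hC ⊢
      rw [mem_partF] at hP'
      obtain ⟨hsub, hcard, h2, hdisj, hbi⟩ := hP'
      have hvC : v ∉ C := fun h => hvm (hsub C hC h)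
      have hvA : ∀ A ∈ P', v ∉ A := fun A hA h => hvm (hsub A hA h)
      have hnew : insert v C ∉ P'.erase C := by
        intro h
        exact hvA _ (Finset.mem_of_mem_erase h) (Finset.mem_insert_self v C)
      have hdisjNew : ∀ A ∈ P'.erase C, Disjoint (insert v C) A := by
        intro A hA
        rw [Finset.disjoint_insert_left]
        exact ⟨hvA A (Finset.mem_of_mem_erase hA),
          hdisj _ hC _ (Finset.mem_of_mem_erase hA) (Finset.ne_of_mem_erase hA).symm⟩
      have hPdisj : ∀ A ∈ insert (insert v C) (P'.erase C), ∀ A' ∈ insert (insert v C) (P'.erase C),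
          A ≠ A' → Disjoint A A' := by
        intro A hA A' hA' hne
        rcases Finset.mem_insert.1 hA with rfl | hA <;>
          rcases Finset.mem_insert.1 hA' with rfl | hA'
        · exact absurd rfl hne
        · exact hdisjNew A' hA'
        · exact (hdisjNew A hA).symm
        · exact hdisj _ (Finset.mem_of_mem_erase hA) _ (Finset.mem_of_mem_erase hA') hne
      have hBnew : blockAt v (insert (insert v C) (P'.erase C)) = insert v C :=
        blockAt_eq hPdisj (Finset.mem_insert_self _ _) (Finset.mem_insert_self v C)
      rw [Finset.mem_coe, Finset.mem_filter]
      constructor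
      · rw [mem_partF]
        refine ⟨?_, ?_, ?_, hPdisj, ?_⟩
        · intro A hA
          rcases Finset.mem_insert.1 hA with rfl | hA
          · intro x hx
            rcases Finset.mem_insert.1 hx with rfl | hx
            · rw [Finset.mem_Icc]; omega
            · exact hIccSub (hsub C hC hx)
          · exact (hsub A (Finset.mem_of_mem_erase hA)).trans hIccSub
        · rw [Finset.card_insert_of_notMem hnew, Finset.card_erase_of_mem hC]
          omega
        · intro A hA
          rcases Finset.mem_insert.1 hA with rfl | hA
          · rw [Finset.card_insert_of_notMem hvC]
            have := h2 C hC; omega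
          · exact h2 A (Finset.mem_of_mem_erase hA)
        · ext x
          simp only [Finset.mem_biUnion, id]
          constructor
          · rintro ⟨A, hA, hxA⟩
            rcases Finset.mem_insert.1 hA with rfl | hA
            · rcases Finset.mem_insert.1 hxA with rfl | hxA
              · rw [Finset.mem_Icc]; omega
              · exact hIccSub (hsub C hC hxA)
            · exact hIccSub (hsub A (Finset.mem_of_mem_erase hA) hxA)
          · intro hx
            rw [Finset.mem_Icc] at hx
            by_cases hxv : x = v
            · exact ⟨insert v C, Finset.mem_insert_self _ _, hxv ▸ Finset.mem_insert_self v C⟩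
            · have hx' : x ∈ P'.biUnion id := by
                rw [hbi, Finset.mem_Icc]; omega
              obtain ⟨A, hA, hxA⟩ := Finset.mem_biUnion.1 hx'
              by_cases hAC : A = C
              · subst hAC
                exact ⟨insert v A, Finset.mem_insert_self _ _, Finset.mem_insert_of_mem hxA⟩
              · exact ⟨A, Finset.mem_insert_of_mem (Finset.mem_erase.2 ⟨hAC, hA⟩), hxA⟩
      · rw [hBnew, Finset.card_insert_of_notMem hvC]
        have := h2 C hC; omega
    · -- left_inv
      intro P hP
      rw [Finset.mem_coe, Finset.mem_filter] at hP
      obtain ⟨hPmem, hcond⟩ := hP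
      obtain ⟨hB, hvB⟩ := blockAt_mem (hvmem P hPmem)
      set B := blockAt v P with hBdef
      rw [mem_partF] at hPmem
      obtain ⟨hsub, hcard, h2, hdisj, hbi⟩ := hPmem
      have hBe : B.erase v ∉ P.erase B := by
        intro hmem
        have hne := Finset.ne_of_mem_erase hmem
        have hdj := hdisj _ (Finset.mem_of_mem_erase hmem) _ hB hne
        obtain ⟨x, hx⟩ : (B.erase v).Nonempty := by
          rw [← Finset.card_pos, Finset.card_erase_of_mem hvB]; omega
        exact Finset.disjoint_left.1 hdj hx (Finset.mem_of_mem_erase hx)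
      simp only
      rw [Finset.erase_insert hBe, Finset.insert_erase hvB, Finset.insert_erase hB]
    · -- right_inv
      intro q hq
      rw [Finset.mem_coe, mem_pairs] at hq
      obtain ⟨hP', hC⟩ := hq
      obtain ⟨P', C⟩ := q
      simp only at hP' hC ⊢
      rw [mem_partF] at hP'
      obtain ⟨hsub, hcard, h2, hdisj, hbi⟩ := hP'
      have hvC : v ∉ C := fun h => hvm (hsub C hC h)
      have hvA : ∀ A ∈ P', v ∉ A := fun A hA h => hvm (hsub A hA h)
      have hnew : insert v C ∉ P'.erase C := by
        intro h
        exact hvA _ (Finset.mem_of_mem_erase h) (Finset.mem_insert_self v C)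
      have hdisjNew : ∀ A ∈ P'.erase C, Disjoint (insert v C) A := by
        intro A hA
        rw [Finset.disjoint_insert_left]
        exact ⟨hvA A (Finset.mem_of_mem_erase hA),
          hdisj _ hC _ (Finset.mem_of_mem_erase hA) (Finset.ne_of_mem_erase hA).symm⟩
      have hPdisj : ∀ A ∈ insert (insert v C) (P'.erase C), ∀ A' ∈ insert (insert v C) (P'.erase C),
          A ≠ A' → Disjoint A A' := by
        intro A hA A' hA' hne
        rcases Finset.mem_insert.1 hA with rfl | hA <;>
          rcases Finset.mem_insert.1 hA' with rfl | hA'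
        · exact absurd rfl hne
        · exact hdisjNew A' hA'
        · exact (hdisjNew A hA).symm
        · exact hdisj _ (Finset.mem_of_mem_erase hA) _ (Finset.mem_of_mem_erase hA') hne
      have hBnew : blockAt v (insert (insert v C) (P'.erase C)) = insert v C :=
        blockAt_eq hPdisj (Finset.mem_insert_self _ _) (Finset.mem_insert_self v C)
      rw [hBnew, Finset.erase_insert hvC, Finset.erase_insert hnew, Finset.insert_erase hC]
  have hA2 : (pairs (partF (Icc 1 m) k) (fun P => P)).card = k * (partF (Icc 1 m) k).card := by
    rw [card_pairs]
    rw [Finset.sum_congr rfl (fun P hP => (mem_partF.1 hP).2.1), Finset.sum_const, smul_eq_mul,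
      mul_comm]
  have hB : ((partF (Icc 1 (m+1)) k).filter (fun P => ¬ 3 ≤ (blockAt v P).card)).card
      = (pairs (Icc 1 m) (fun b => partF ((Icc 1 m).erase b) (k-1))).card := by
    apply Finset.card_nbij'
      (i := fun P => (pick ((blockAt v P).erase v), P.erase (blockAt v P)))
      (j := fun q => insert (insert q.1 {v}) q.2)
    · -- hi
      intro P hP
      rw [Finset.mem_coe, Finset.mem_filter] at hP
      obtain ⟨hPmem, hcond⟩ := hP
      obtain ⟨hB, hvB⟩ := blockAt_mem (hvmem P hPmem)
      set B := blockAt v P with hBdef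
      rw [mem_partF] at hPmem
      obtain ⟨hsub, hcard, h2, hdisj, hbi⟩ := hPmem
      have hBcard : B.card = 2 := le_antisymm (by omega) (h2 B hB)
      have hBe1 : (B.erase v).card = 1 := by
        rw [Finset.card_erase_of_mem hvB, hBcard]
      obtain ⟨b, hb⟩ := Finset.card_eq_one.1 hBe1
      have hpick : pick (B.erase v) = b := pick_eq hb
      have hbB : b ∈ B := Finset.mem_of_mem_erase (hb ▸ Finset.mem_singleton_self b)
      have hbv : b ≠ v := Finset.ne_of_mem_erase (hb ▸ Finset.mem_singleton_self b)
      have hbm : b ∈ Icc 1 m := by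
        have := hsub B hB hbB
        rw [Finset.mem_Icc] at this ⊢
        omega
      have hnotv : ∀ A ∈ P.erase B, v ∉ A := by
        intro A hA hvA
        exact (Finset.ne_of_mem_erase hA)
          ((blockAt_eq hdisj (Finset.mem_of_mem_erase hA) hvA).symm)
      have hnotb : ∀ A ∈ P.erase B, b ∉ A := by
        intro A hA hbA
        exact Finset.disjoint_left.1
          (hdisj _ (Finset.mem_of_mem_erase hA) _ hB (Finset.ne_of_mem_erase hA)) hbA hbB
      have hsubAe : ∀ A ∈ P.erase B, A ⊆ (Icc 1 m).erase b := by
        intro A hA x hx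
        refine Finset.mem_erase.2 ⟨fun h => hnotb A hA (h ▸ hx), ?_⟩
        exact hsub' _ (hsub A (Finset.mem_of_mem_erase hA)) (hnotv A hA) hx
      rw [Finset.mem_coe, mem_pairs]
      simp only [← hBdef, hpick]
      refine ⟨hbm, ?_⟩
      rw [mem_partF]
      refine ⟨hsubAe, ?_, ?_, ?_, ?_⟩
      · rw [Finset.card_erase_of_mem hB]; omega
      · exact fun A hA => h2 A (Finset.mem_of_mem_erase hA)
      · exact fun A hA A' hA' hne =>
          hdisj _ (Finset.mem_of_mem_erase hA) _ (Finset.mem_of_mem_erase hA') hne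
      · ext x
        simp only [Finset.mem_biUnion, id]
        constructor
        · rintro ⟨A, hA, hxA⟩
          exact hsubAe A hA hxA
        · intro hx
          rw [Finset.mem_erase, Finset.mem_Icc] at hx
          have hx' : x ∈ P.biUnion id := by
            rw [hbi, Finset.mem_Icc]; omega
          obtain ⟨A, hA, hxA⟩ := Finset.mem_biUnion.1 hx'
          have hAB : A ≠ B := by
            intro h
            have hxv : x ≠ v := by omega
            have hxB : x ∈ B.erase v := Finset.mem_erase.2 ⟨hxv, h ▸ hxA⟩
            rw [hb, Finset.mem_singleton] at hxB
            exact hx.1 hxB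
          exact ⟨A, Finset.mem_erase.2 ⟨hAB, hA⟩, hxA⟩
    · -- hj
      intro q hq
      rw [Finset.mem_coe, mem_pairs] at hq
      obtain ⟨b, P'⟩ := q
      simp only at hq ⊢
      obtain ⟨hbm, hP'⟩ := hq
      rw [Finset.mem_Icc] at hbm
      rw [mem_partF] at hP'
      obtain ⟨hsub, hcard, h2, hdisj, hbi⟩ := hP'
      have hbv : b ≠ v := by omega
      have hvnew : v ∈ insert b ({v} : Finset ℕ) :=
        Finset.mem_insert_of_mem (Finset.mem_singleton_self v)
      have hnewcard : (insert b ({v} : Finset ℕ)).card = 2 := by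
        rw [Finset.card_insert_of_notMem (by simp [hbv]), Finset.card_singleton]
      have hvA : ∀ A ∈ P', v ∉ A := by
        intro A hA h
        have := hsub A hA h
        rw [Finset.mem_erase, Finset.mem_Icc] at this
        omega
      have hbA : ∀ A ∈ P', b ∉ A := by
        intro A hA h
        have := hsub A hA h
        rw [Finset.mem_erase] at this
        exact this.1 rfl
      have hnew : insert b ({v} : Finset ℕ) ∉ P' := fun h => hvA _ h hvnew
      have hPdisj : ∀ A ∈ insert (insert b ({v} : Finset ℕ)) P',
          ∀ A' ∈ insert (insert b ({v} : Finset ℕ)) P', A ≠ A' → Disjoint A A' := by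
        intro A hA A' hA' hne
        have hdnew : ∀ A'' ∈ P', Disjoint (insert b ({v} : Finset ℕ)) A'' := by
          intro A'' hA''
          rw [Finset.disjoint_insert_left, Finset.disjoint_singleton_left]
          exact ⟨hbA _ hA'', hvA _ hA''⟩
        rcases Finset.mem_insert.1 hA with rfl | hA <;>
          rcases Finset.mem_insert.1 hA' with rfl | hA'
        · exact absurd rfl hne
        · exact hdnew A' hA'
        · exact (hdnew A hA).symm
        · exact hdisj A hA A' hA' hne
      have hBnew : blockAt v (insert (insert b ({v} : Finset ℕ)) P') = insert b {v} :=
        blockAt_eq hPdisj (Finset.mem_insert_self _ _) hvnew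
      rw [Finset.mem_coe, Finset.mem_filter]
      constructor
      · rw [mem_partF]
        refine ⟨?_, ?_, ?_, hPdisj, ?_⟩
        · intro A hA
          rcases Finset.mem_insert.1 hA with rfl | hA
          · intro x hx
            rcases Finset.mem_insert.1 hx with rfl | hx
            · rw [Finset.mem_Icc]; omega
            · rw [Finset.mem_singleton] at hx
              subst hx
              rw [Finset.mem_Icc]; omega
          · intro x hx
            have := hsub A hA hx
            rw [Finset.mem_erase, Finset.mem_Icc] at this
            rw [Finset.mem_Icc]; omega
        · rw [Finset.card_insert_of_notMem hnew]; omega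
        · intro A hA
          rcases Finset.mem_insert.1 hA with rfl | hA
          · omega
          · exact h2 A hA
        · ext x
          simp only [Finset.mem_biUnion, id]
          constructor
          · rintro ⟨A, hA, hxA⟩
            rcases Finset.mem_insert.1 hA with rfl | hA
            · rcases Finset.mem_insert.1 hxA with rfl | hxA
              · rw [Finset.mem_Icc]; omega
              · rw [Finset.mem_singleton] at hxA; subst hxA
                rw [Finset.mem_Icc]; omega
            · have := hsub A hA hxA
              rw [Finset.mem_erase, Finset.mem_Icc] at this
              rw [Finset.mem_Icc]; omega
          · intro hx
            rw [Finset.mem_Icc] at hx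
            by_cases hxv : x = v
            · exact ⟨insert b {v}, Finset.mem_insert_self _ _, hxv ▸ hvnew⟩
            · by_cases hxb : x = b
              · exact ⟨insert b {v}, Finset.mem_insert_self _ _,
                  hxb ▸ Finset.mem_insert_self _ _⟩
              · have hx' : x ∈ P'.biUnion id := by
                  rw [hbi, Finset.mem_erase, Finset.mem_Icc]
                  exact ⟨hxb, by omega, by omega⟩
                obtain ⟨A, hA, hxA⟩ := Finset.mem_biUnion.1 hx'
                exact ⟨A, Finset.mem_insert_of_mem hA, hxA⟩
      · rw [hBnew, hnewcard]
        omega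
    · -- left_inv
      intro P hP
      rw [Finset.mem_coe, Finset.mem_filter] at hP
      obtain ⟨hPmem, hcond⟩ := hP
      obtain ⟨hB, hvB⟩ := blockAt_mem (hvmem P hPmem)
      set B := blockAt v P with hBdef
      rw [mem_partF] at hPmem
      obtain ⟨hsub, hcard, h2, hdisj, hbi⟩ := hPmem
      have hBcard : B.card = 2 := le_antisymm (by omega) (h2 B hB)
      have hBe1 : (B.erase v).card = 1 := by
        rw [Finset.card_erase_of_mem hvB, hBcard]
      obtain ⟨b, hb⟩ := Finset.card_eq_one.1 hBe1
      have hpick : pick (B.erase v) = b := pick_eq hb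
      simp only [← hBdef, hpick]
      have hBpair : B = insert b {v} := by
        rw [← Finset.insert_erase hvB, hb]
        exact Finset.pair_comm v b
      rw [← hBpair, Finset.insert_erase hB]
    · -- right_inv
      intro q hq
      rw [Finset.mem_coe, mem_pairs] at hq
      obtain ⟨b, P'⟩ := q
      simp only at hq ⊢
      obtain ⟨hbm, hP'⟩ := hq
      rw [Finset.mem_Icc] at hbm
      rw [mem_partF] at hP'
      obtain ⟨hsub, hcard, h2, hdisj, hbi⟩ := hP'
      have hbv : b ≠ v := by omega
      have hvnew : v ∈ insert b ({v} : Finset ℕ) :=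
        Finset.mem_insert_of_mem (Finset.mem_singleton_self v)
      have hvA : ∀ A ∈ P', v ∉ A := by
        intro A hA h
        have := hsub A hA h
        rw [Finset.mem_erase, Finset.mem_Icc] at this
        omega
      have hbA : ∀ A ∈ P', b ∉ A := by
        intro A hA h
        have := hsub A hA h
        rw [Finset.mem_erase] at this
        exact this.1 rfl
      have hnew : insert b ({v} : Finset ℕ) ∉ P' := fun h => hvA _ h hvnew
      have hPdisj : ∀ A ∈ insert (insert b ({v} : Finset ℕ)) P',
          ∀ A' ∈ insert (insert b ({v} : Finset ℕ)) P', A ≠ A' → Disjoint A A' := by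
        intro A hA A' hA' hne
        have hdnew : ∀ A'' ∈ P', Disjoint (insert b ({v} : Finset ℕ)) A'' := by
          intro A'' hA''
          rw [Finset.disjoint_insert_left, Finset.disjoint_singleton_left]
          exact ⟨hbA _ hA'', hvA _ hA''⟩
        rcases Finset.mem_insert.1 hA with rfl | hA <;>
          rcases Finset.mem_insert.1 hA' with rfl | hA'
        · exact absurd rfl hne
        · exact hdnew A' hA'
        · exact (hdnew A hA).symm
        · exact hdisj A hA A' hA' hne
      have hBnew : blockAt v (insert (insert b ({v} : Finset ℕ)) P') = insert b {v} :=
        blockAt_eq hPdisj (Finset.mem_insert_self _ _) hvnew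
      have herase : (insert b ({v} : Finset ℕ)).erase v = {b} := by
        ext x
        simp only [Finset.mem_erase, Finset.mem_insert, Finset.mem_singleton]
        constructor
        · rintro ⟨h1, h2 | h2⟩
          · exact h2
          · exact absurd h2 h1
        · rintro rfl
          exact ⟨hbv, Or.inl rfl⟩
      rw [hBnew, herase, pick_eq rfl, Finset.erase_insert hnew]
  have hB2 : (pairs (Icc 1 m) (fun b => partF ((Icc 1 m).erase b) (k-1))).card
      = m * (partF (Icc 1 (m-1)) (k-1)).card := by
    rw [card_pairs]
    have heq : ∀ b ∈ Icc 1 m,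
        (partF ((Icc 1 m).erase b) (k-1)).card = (partF (Icc 1 (m-1)) (k-1)).card := by
      intro b hb
      rw [Finset.mem_Icc] at hb
      have h1 := relabel_image (m := m) (b := b) hb.1 hb.2
      have h2 := partF_invariance ((Icc 1 m).erase b) (k-1) _ (relabel_injOn (m := m) (b := b))
      rw [h1] at h2
      exact h2.symm
    rw [Finset.sum_congr rfl heq, Finset.sum_const, smul_eq_mul, Nat.card_Icc]
    congr 1
  rw [hA, hA2, hB, hB2]

set_option maxHeartbeats 2000000 in
lemma nested_rec (n k : ℕ) (hn : 2 ≤ n) (hk : 1 ≤ k) :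
    (nestedF (Icc 1 (n+1)) k).card =
      k * (nestedF (Icc 1 n) k).card + (n + k - 1) * (nestedF (Icc 1 n) (k-1)).card := by
  classical
  set v := n + 1 with hv
  have hvn : v ∉ Icc 1 n := by simp [hv]
  have hvtop : v ∈ Icc 1 (n+1) := by rw [Finset.mem_Icc]; omega
  have hIccE : (Icc 1 (n+1)).erase v = Icc 1 n := by
    ext x; rw [Finset.mem_erase, Finset.mem_Icc, Finset.mem_Icc]; omega
  have hInsIcc : insert v (Icc 1 n) = Icc 1 (n+1) := by
    ext x; rw [Finset.mem_insert, Finset.mem_Icc, Finset.mem_Icc]; omega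
  have hIccSub : Icc 1 n ⊆ Icc 1 (n+1) := Finset.Icc_subset_Icc_right (by omega)
  have hsubE : ∀ A : Finset ℕ, A ⊆ Icc 1 (n+1) → A.erase v ⊆ Icc 1 n := by
    intro A hA x hx
    rw [Finset.mem_erase] at hx
    have := hA hx.2
    rw [Finset.mem_Icc] at this ⊢
    have := hx.1
    omega
  have hsubNv : ∀ A : Finset ℕ, A ⊆ Icc 1 (n+1) → v ∉ A → A ⊆ Icc 1 n := by
    intro A hA hvA
    have := hsubE A hA
    rwa [Finset.erase_eq_of_notMem hvA] at this
  rw [← Finset.card_filter_add_card_filter_not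
    (p := fun S => 3 ≤ (minAt v S).card ∧ (minAt v S).erase v ∉ S)
    (s := nestedF (Icc 1 (n+1)) k)]
  have hCaseI : ((nestedF (Icc 1 (n+1)) k).filter
      (fun S => 3 ≤ (minAt v S).card ∧ (minAt v S).erase v ∉ S)).card
      = (pairs (nestedF (Icc 1 n) k) (fun S => S)).card := by
    apply Finset.card_nbij'
      (i := fun S => (S.image (fun B => B.erase v), (minAt v S).erase v))
      (j := fun q => q.1.image (fun C => if q.2 ⊆ C then insert v C else C))
    · -- hi
      intro S hS
      rw [Finset.mem_coe, Finset.mem_filter] at hS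
      obtain ⟨hSmem, h3, hnotin⟩ := hS
      rw [mem_nestedF] at hSmem
      obtain ⟨hsub, hcard, htop, h2, hlam⟩ := hSmem
      obtain ⟨hM, hvM, hMmin⟩ := minAt_spec hlam htop hvtop
      set M := minAt v S with hMdef
      have hMne : (M.erase v).Nonempty := by
        rw [← Finset.card_pos, Finset.card_erase_of_mem hvM]; omega
      have hinj : Set.InjOn (fun B : Finset ℕ => B.erase v) ↑S := by
        intro B hB C hC hBC
        simp only at hBC
        rw [Finset.mem_coe] at hB hC
        by_cases hvB : v ∈ B <;> by_cases hvC : v ∈ C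
        · rw [← Finset.insert_erase hvB, ← Finset.insert_erase hvC, hBC]
        · exfalso
          have hCB : C = B.erase v := by rw [hBC, Finset.erase_eq_of_notMem hvC]
          have hMB : M ⊆ B := hMmin B hB hvB
          rcases hlam C hC M hM with h | h | h
          swap
          · exact hvC (h hvM)
          · have hCMe : C ⊆ M.erase v := fun x hx =>
              Finset.mem_erase.2 ⟨fun hxv => hvC (hxv ▸ hx), h hx⟩
            have hMeC : M.erase v ⊆ C := by
              rw [hCB]
              exact fun x hx => Finset.mem_erase.2
                ⟨(Finset.mem_erase.1 hx).1, hMB (Finset.mem_of_mem_erase hx)⟩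
            exact hnotin ((Finset.Subset.antisymm hMeC hCMe) ▸ hC)
          · obtain ⟨x, hx⟩ := hMne
            have hxC : x ∈ C := by
              rw [hCB]
              exact Finset.mem_erase.2
                ⟨(Finset.mem_erase.1 hx).1, hMB (Finset.mem_of_mem_erase hx)⟩
            exact Finset.disjoint_left.1 h hxC (Finset.mem_of_mem_erase hx)
        · exfalso
          have hBC' : B = C.erase v := by rw [← hBC, Finset.erase_eq_of_notMem hvB]
          have hMC : M ⊆ C := hMmin C hC hvC
          rcases hlam B hB M hM with h | h | h
          swap
          · exact hvB (h hvM)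
          · have hBMe : B ⊆ M.erase v := fun x hx =>
              Finset.mem_erase.2 ⟨fun hxv => hvB (hxv ▸ hx), h hx⟩
            have hMeB : M.erase v ⊆ B := by
              rw [hBC']
              exact fun x hx => Finset.mem_erase.2
                ⟨(Finset.mem_erase.1 hx).1, hMC (Finset.mem_of_mem_erase hx)⟩
            exact hnotin ((Finset.Subset.antisymm hMeB hBMe) ▸ hB)
          · obtain ⟨x, hx⟩ := hMne
            have hxB : x ∈ B := by
              rw [hBC']
              exact Finset.mem_erase.2
                ⟨(Finset.mem_erase.1 hx).1, hMC (Finset.mem_of_mem_erase hx)⟩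
            exact Finset.disjoint_left.1 h hxB (Finset.mem_of_mem_erase hx)
        · rw [← Finset.erase_eq_of_notMem hvB, ← Finset.erase_eq_of_notMem hvC, hBC]
      rw [Finset.mem_coe, mem_pairs]
      constructor
      · rw [mem_nestedF]
        refine ⟨?_, ?_, ?_, ?_, ?_⟩
        · intro A hA
          obtain ⟨B, hB, rfl⟩ := Finset.mem_image.1 hA
          exact hsubE B (hsub B hB)
        · rw [Finset.card_image_of_injOn hinj, hcard]
        · exact Finset.mem_image.2 ⟨Icc 1 (n+1), htop, hIccE⟩
        · intro A hA
          obtain ⟨B, hB, rfl⟩ := Finset.mem_image.1 hA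
          by_cases hvB : v ∈ B
          · have hMB : M ⊆ B := hMmin B hB hvB
            have := Finset.card_le_card hMB
            rw [Finset.card_erase_of_mem hvB]
            omega
          · rw [Finset.erase_eq_of_notMem hvB]
            exact h2 B hB
        · intro A hA A' hA'
          obtain ⟨B, hB, rfl⟩ := Finset.mem_image.1 hA
          obtain ⟨C, hC, rfl⟩ := Finset.mem_image.1 hA'
          rcases hlam B hB C hC with h | h | h
          · exact Or.inl (Finset.erase_subset_erase v h)
          · exact Or.inr (Or.inl (Finset.erase_subset_erase v h))
          · exact Or.inr (Or.inr (h.mono (Finset.erase_subset v B) (Finset.erase_subset v C)))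
      · exact Finset.mem_image.2 ⟨M, hM, rfl⟩
    · -- hj
      intro q hq
      rw [Finset.mem_coe, mem_pairs] at hq
      obtain ⟨S', A⟩ := q
      simp only at hq ⊢
      obtain ⟨hS', hA⟩ := hq
      rw [mem_nestedF] at hS'
      obtain ⟨hsub, hcard, htop, h2, hlam⟩ := hS'
      have hvC : ∀ C ∈ S', v ∉ C := fun C hC h => hvn (hsub C hC h)
      have hvA : v ∉ A := hvC A hA
      have hAne : A.Nonempty := Finset.card_pos.1 (by have := h2 A hA; omega)
      have hinj : ∀ C1 ∈ S', ∀ C2 ∈ S',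
          (if A ⊆ C1 then insert v C1 else C1) = (if A ⊆ C2 then insert v C2 else C2) →
          C1 = C2 := by
        intro C1 h1 C2 h2' heq
        by_cases ha1 : A ⊆ C1 <;> by_cases ha2 : A ⊆ C2 <;>
          simp only [ha1, ha2, if_pos, if_neg, if_true, if_false] at heq
        · rw [← Finset.erase_insert (hvC C1 h1), heq, Finset.erase_insert (hvC C2 h2')]
        · exact absurd (heq ▸ Finset.mem_insert_self v C1) (hvC C2 h2')
        · exact absurd (heq ▸ Finset.mem_insert_self v C2) (hvC C1 h1)
        · exact heq
      have hAnotS : A ∉ S'.image (fun C => if A ⊆ C then insert v C else C) := by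
        intro hmem
        obtain ⟨C, hC, hCA⟩ := Finset.mem_image.1 hmem
        by_cases ha : A ⊆ C
        · rw [if_pos ha] at hCA
          exact hvA (hCA ▸ Finset.mem_insert_self v C)
        · rw [if_neg ha] at hCA
          exact ha (hCA ▸ Finset.Subset.refl A)
      have hMnew : minAt v (S'.image (fun C => if A ⊆ C then insert v C else C))
          = insert v A := by
        apply minAt_eq
        · exact Finset.mem_image.2 ⟨A, hA, by rw [if_pos (Finset.Subset.refl A)]⟩
        · exact Finset.mem_insert_self v A
        · intro B hB hvB
          obtain ⟨C, hC, rfl⟩ := Finset.mem_image.1 hB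
          by_cases ha : A ⊆ C
          · rw [if_pos ha] at hvB ⊢
            exact Finset.insert_subset_insert v ha
          · rw [if_neg ha] at hvB
            exact absurd hvB (hvC C hC)
      rw [Finset.mem_coe, Finset.mem_filter]
      refine ⟨?_, ?_⟩
      · rw [mem_nestedF]
        refine ⟨?_, ?_, ?_, ?_, ?_⟩
        · intro B hB
          obtain ⟨C, hC, rfl⟩ := Finset.mem_image.1 hB
          by_cases ha : A ⊆ C
          · rw [if_pos ha]
            exact Finset.insert_subset hvtop ((hsub C hC).trans hIccSub)
          · rw [if_neg ha]
            exact (hsub C hC).trans hIccSub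
        · rw [Finset.card_image_of_injOn (fun C1 h1 C2 h2' => hinj C1 h1 C2 h2'), hcard]
        · refine Finset.mem_image.2 ⟨Icc 1 n, htop, ?_⟩
          rw [if_pos (hsub A hA), hInsIcc]
        · intro B hB
          obtain ⟨C, hC, rfl⟩ := Finset.mem_image.1 hB
          by_cases ha : A ⊆ C
          · rw [if_pos ha, Finset.card_insert_of_notMem (hvC C hC)]
            have := h2 C hC; omega
          · rw [if_neg ha]; exact h2 C hC
        · intro B hB B' hB'
          obtain ⟨C1, h1, rfl⟩ := Finset.mem_image.1 hB
          obtain ⟨C2, h2', rfl⟩ := Finset.mem_image.1 hB'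
          by_cases ha1 : A ⊆ C1 <;> by_cases ha2 : A ⊆ C2
          · rw [if_pos ha1, if_pos ha2]
            obtain ⟨x, hx⟩ := hAne
            rcases hlam C1 h1 C2 h2' with h | h | h
            · exact Or.inl (Finset.insert_subset_insert v h)
            · exact Or.inr (Or.inl (Finset.insert_subset_insert v h))
            · exact absurd (ha2 hx) (Finset.disjoint_left.1 h (ha1 hx))
          · rw [if_pos ha1, if_neg ha2]
            rcases hlam C1 h1 C2 h2' with h | h | h
            · exact absurd (ha1.trans h) ha2
            · exact Or.inr (Or.inl (h.trans (Finset.subset_insert v C1)))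
            · exact Or.inr (Or.inr (Finset.disjoint_insert_left.2 ⟨hvC C2 h2', h⟩))
          · rw [if_neg ha1, if_pos ha2]
            rcases hlam C1 h1 C2 h2' with h | h | h
            · exact Or.inl (h.trans (Finset.subset_insert v C2))
            · exact absurd (ha2.trans h) ha1
            · exact Or.inr (Or.inr (Finset.disjoint_insert_right.2 ⟨hvC C1 h1, h⟩))
          · rw [if_neg ha1, if_neg ha2]
            exact hlam C1 h1 C2 h2'
      · rw [hMnew, Finset.erase_insert hvA, Finset.card_insert_of_notMem hvA]
        have := h2 A hA
        exact ⟨by omega, hAnotS⟩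
    · -- left_inv
      intro S hS
      rw [Finset.mem_coe, Finset.mem_filter] at hS
      obtain ⟨hSmem, h3, hnotin⟩ := hS
      rw [mem_nestedF] at hSmem
      obtain ⟨hsub, hcard, htop, h2, hlam⟩ := hSmem
      obtain ⟨hM, hvM, hMmin⟩ := minAt_spec hlam htop hvtop
      set M := minAt v S with hMdef
      have hMne : (M.erase v).Nonempty := by
        rw [← Finset.card_pos, Finset.card_erase_of_mem hvM]; omega
      simp only
      rw [Finset.image_image]
      have hpt : ∀ B ∈ S,
          ((fun C => if M.erase v ⊆ C then insert v C else C) ∘ (fun B => B.erase v)) B = B := by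
        intro B hB
        simp only [Function.comp_apply]
        by_cases hvB : v ∈ B
        · rw [if_pos (Finset.erase_subset_erase v (hMmin B hB hvB)), Finset.insert_erase hvB]
        · rw [Finset.erase_eq_of_notMem hvB]
          have hns : ¬ M.erase v ⊆ B := by
            intro hsub2
            rcases hlam B hB M hM with h | h | h
            · have hBMe : B ⊆ M.erase v := fun x hx =>
                Finset.mem_erase.2 ⟨fun hxv => hvB (hxv ▸ hx), h hx⟩
              exact hnotin ((Finset.Subset.antisymm hsub2 hBMe) ▸ hB)
            · exact hvB (h hvM)
            · obtain ⟨x, hx⟩ := hMne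
              exact Finset.disjoint_left.1 h (hsub2 hx) (Finset.mem_of_mem_erase hx)
          rw [if_neg hns]
      ext B
      constructor
      · intro hB
        obtain ⟨C, hC, hCB⟩ := Finset.mem_image.1 hB
        rw [hpt C hC] at hCB
        exact hCB ▸ hC
      · intro hB
        exact Finset.mem_image.2 ⟨B, hB, hpt B hB⟩
    · -- right_inv
      intro q hq
      rw [Finset.mem_coe, mem_pairs] at hq
      obtain ⟨S', A⟩ := q
      simp only at hq ⊢
      obtain ⟨hS', hA⟩ := hq
      rw [mem_nestedF] at hS'
      obtain ⟨hsub, hcard, htop, h2, hlam⟩ := hS'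
      have hvC : ∀ C ∈ S', v ∉ C := fun C hC h => hvn (hsub C hC h)
      have hvA : v ∉ A := hvC A hA
      have hMnew : minAt v (S'.image (fun C => if A ⊆ C then insert v C else C))
          = insert v A := by
        apply minAt_eq
        · exact Finset.mem_image.2 ⟨A, hA, by rw [if_pos (Finset.Subset.refl A)]⟩
        · exact Finset.mem_insert_self v A
        · intro B hB hvB
          obtain ⟨C, hC, rfl⟩ := Finset.mem_image.1 hB
          by_cases ha : A ⊆ C
          · rw [if_pos ha] at hvB ⊢
            exact Finset.insert_subset_insert v ha
          · rw [if_neg ha] at hvB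
            exact absurd hvB (hvC C hC)
      rw [hMnew, Finset.erase_insert hvA, Finset.image_image]
      have hpt : ∀ C ∈ S',
          ((fun B => B.erase v) ∘ (fun C => if A ⊆ C then insert v C else C)) C = C := by
        intro C hC
        simp only [Function.comp_apply]
        by_cases ha : A ⊆ C
        · rw [if_pos ha, Finset.erase_insert (hvC C hC)]
        · rw [if_neg ha, Finset.erase_eq_of_notMem (hvC C hC)]
      have himg : S'.image ((fun B => B.erase v) ∘ (fun C => if A ⊆ C then insert v C else C))
          = S' := by
        ext B
        constructor
        · intro hB
          obtain ⟨C, hC, hCB⟩ := Finset.mem_image.1 hB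
          rw [hpt C hC] at hCB
          exact hCB ▸ hC
        · intro hB
          exact Finset.mem_image.2 ⟨B, hB, hpt B hB⟩
      rw [himg]
  have hCaseII : ((nestedF (Icc 1 (n+1)) k).filter
      (fun S => ¬(3 ≤ (minAt v S).card ∧ (minAt v S).erase v ∉ S))).card
      = (pairs (nestedF (Icc 1 n) (k-1))
          (fun S' => S' ∪ (Icc 1 n).image (fun x => {x}))).card := by
    apply Finset.card_nbij'
      (i := fun S => ((S.erase (minAt v S)).image (fun B => B.erase v), (minAt v S).erase v))
      (j := fun q => insert (insert v q.2)
          (q.1.image (fun C => if q.2 ⊂ C then insert v C else C)))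
    · -- hi
      intro S hS
      rw [Finset.mem_coe, Finset.mem_filter] at hS
      obtain ⟨hSmem, hnc⟩ := hS
      push_neg at hnc
      rw [mem_nestedF] at hSmem
      obtain ⟨hsub, hcard, htop, h2, hlam⟩ := hSmem
      obtain ⟨hM, hvM, hMmin⟩ := minAt_spec hlam htop hvtop
      set M := minAt v S with hMdef
      have hM2 : 2 ≤ M.card := h2 M hM
      have hMne : (M.erase v).Nonempty := by
        rw [← Finset.card_pos, Finset.card_erase_of_mem hvM]; omega
      have hinj : Set.InjOn (fun B : Finset ℕ => B.erase v) ↑(S.erase M) := by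
        intro B hB C hC hBC
        simp only at hBC
        rw [Finset.mem_coe, Finset.mem_erase] at hB hC
        by_cases hvB : v ∈ B <;> by_cases hvC : v ∈ C
        · rw [← Finset.insert_erase hvB, ← Finset.insert_erase hvC, hBC]
        · exfalso
          have hCB : C = B.erase v := by rw [hBC, Finset.erase_eq_of_notMem hvC]
          have hMB : M ⊆ B := hMmin B hB.2 hvB
          rcases hlam C hC.2 M hM with h | h | h
          · have hCMe : C ⊆ M.erase v := fun x hx =>
              Finset.mem_erase.2 ⟨fun hxv => hvC (hxv ▸ hx), h hx⟩
            have hMeC : M.erase v ⊆ C := by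
              rw [hCB]
              exact fun x hx => Finset.mem_erase.2
                ⟨(Finset.mem_erase.1 hx).1, hMB (Finset.mem_of_mem_erase hx)⟩
            have hCeq : C = M.erase v := Finset.Subset.antisymm hCMe hMeC
            apply hB.1
            have hBi : B = insert v C := by rw [hCB, Finset.insert_erase hvB]
            rw [hBi, hCeq, Finset.insert_erase hvM]
          · exact hvC (h hvM)
          · obtain ⟨x, hx⟩ := hMne
            have hxC : x ∈ C := by
              rw [hCB]
              exact Finset.mem_erase.2
                ⟨(Finset.mem_erase.1 hx).1, hMB (Finset.mem_of_mem_erase hx)⟩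
            exact Finset.disjoint_left.1 h hxC (Finset.mem_of_mem_erase hx)
        · exfalso
          have hBC' : B = C.erase v := by rw [← hBC, Finset.erase_eq_of_notMem hvB]
          have hMC : M ⊆ C := hMmin C hC.2 hvC
          rcases hlam B hB.2 M hM with h | h | h
          · have hBMe : B ⊆ M.erase v := fun x hx =>
              Finset.mem_erase.2 ⟨fun hxv => hvB (hxv ▸ hx), h hx⟩
            have hMeB : M.erase v ⊆ B := by
              rw [hBC']
              exact fun x hx => Finset.mem_erase.2
                ⟨(Finset.mem_erase.1 hx).1, hMC (Finset.mem_of_mem_erase hx)⟩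
            have hBeq : B = M.erase v := Finset.Subset.antisymm hBMe hMeB
            apply hC.1
            have hCi : C = insert v B := by rw [hBC', Finset.insert_erase hvC]
            rw [hCi, hBeq, Finset.insert_erase hvM]
          · exact hvB (h hvM)
          · obtain ⟨x, hx⟩ := hMne
            have hxB : x ∈ B := by
              rw [hBC']
              exact Finset.mem_erase.2
                ⟨(Finset.mem_erase.1 hx).1, hMC (Finset.mem_of_mem_erase hx)⟩
            exact Finset.disjoint_left.1 h hxB (Finset.mem_of_mem_erase hx)
        · rw [← Finset.erase_eq_of_notMem hvB, ← Finset.erase_eq_of_notMem hvC, hBC]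
      rw [Finset.mem_coe, mem_pairs]
      constructor
      · rw [mem_nestedF]
        refine ⟨?_, ?_, ?_, ?_, ?_⟩
        · intro A hA
          obtain ⟨B, hB, rfl⟩ := Finset.mem_image.1 hA
          exact hsubE B (hsub B (Finset.mem_of_mem_erase hB))
        · rw [Finset.card_image_of_injOn hinj, Finset.card_erase_of_mem hM, hcard]
        · by_cases hMtop : M = Icc 1 (n+1)
          · have hMcard : 3 ≤ M.card := by
              rw [hMtop, Nat.card_Icc]; omega
            have hDS : M.erase v ∈ S := hnc hMcard
            refine Finset.mem_image.2 ⟨M.erase v, ?_, ?_⟩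
            · refine Finset.mem_erase.2 ⟨?_, hDS⟩
              intro h
              rw [← hMdef] at h; rw [← h] at hvM
              exact Finset.notMem_erase v M hvM
            · rw [Finset.erase_eq_of_notMem (Finset.notMem_erase v M), hMtop, hIccE]
          · refine Finset.mem_image.2 ⟨Icc 1 (n+1), ?_, hIccE⟩
            exact Finset.mem_erase.2 ⟨fun h => hMtop h.symm, htop⟩
        · intro A hA
          obtain ⟨B, hB, rfl⟩ := Finset.mem_image.1 hA
          by_cases hvB : v ∈ B
          · have hMB : M ⊂ B :=
              Finset.ssubset_iff_subset_ne.2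
                ⟨hMmin B (Finset.mem_of_mem_erase hB) hvB,
                  fun h => (Finset.ne_of_mem_erase hB) h.symm⟩
            have := Finset.card_lt_card hMB
            rw [Finset.card_erase_of_mem hvB]
            omega
          · rw [Finset.erase_eq_of_notMem hvB]
            exact h2 B (Finset.mem_of_mem_erase hB)
        · intro A hA A' hA'
          obtain ⟨B, hB, rfl⟩ := Finset.mem_image.1 hA
          obtain ⟨C, hC, rfl⟩ := Finset.mem_image.1 hA'
          rcases hlam B (Finset.mem_of_mem_erase hB) C (Finset.mem_of_mem_erase hC)
            with h | h | h
          · exact Or.inl (Finset.erase_subset_erase v h)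
          · exact Or.inr (Or.inl (Finset.erase_subset_erase v h))
          · exact Or.inr (Or.inr (h.mono (Finset.erase_subset v B) (Finset.erase_subset v C)))
      · simp only
        rw [Finset.mem_union]
        by_cases hDS : M.erase v ∈ S
        · left
          refine Finset.mem_image.2 ⟨M.erase v, ?_, ?_⟩
          · refine Finset.mem_erase.2 ⟨?_, hDS⟩
            intro h
            rw [← hMdef] at h; rw [← h] at hvM
            exact Finset.notMem_erase v M hvM
          · rw [Finset.erase_eq_of_notMem (Finset.notMem_erase v M)]
        · right
          have hMcard : M.card = 2 := by
            by_contra h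
            exact hDS (hnc (by omega))
          have hDcard : (M.erase v).card = 1 := by
            rw [Finset.card_erase_of_mem hvM, hMcard]
          obtain ⟨x, hx⟩ := Finset.card_eq_one.1 hDcard
          refine Finset.mem_image.2 ⟨x, ?_, hx.symm⟩
          have : x ∈ M.erase v := hx ▸ Finset.mem_singleton_self x
          exact hsubE M (hsub M hM) this
    · -- hj
      intro q hq
      rw [Finset.mem_coe, mem_pairs] at hq
      obtain ⟨S', D⟩ := q
      simp only at hq ⊢
      obtain ⟨hS', hD⟩ := hq
      rw [mem_nestedF] at hS'
      obtain ⟨hsub, hcard, htop, h2, hlam⟩ := hS'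
      have hvC : ∀ C ∈ S', v ∉ C := fun C hC h => hvn (hsub C hC h)
      rw [Finset.mem_union] at hD
      have hDsub : D ⊆ Icc 1 n := by
        rcases hD with hD | hD
        · exact hsub D hD
        · obtain ⟨x, hx, rfl⟩ := Finset.mem_image.1 hD
          exact Finset.singleton_subset_iff.2 hx
      have hDne : D.Nonempty := by
        rcases hD with hD | hD
        · exact Finset.card_pos.1 (by have := h2 D hD; omega)
        · obtain ⟨x, hx, rfl⟩ := Finset.mem_image.1 hD
          exact ⟨x, Finset.mem_singleton_self x⟩
      have hvD : v ∉ D := fun h => hvn (hDsub h)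
      have hrel : ∀ C ∈ S', ¬ D ⊂ C → C ⊆ D ∨ Disjoint C D := by
        intro C hC hnss
        rcases hD with hDS' | hDx
        · rcases hlam D hDS' C hC with h | h | h
          · left
            rcases eq_or_ne D C with rfl | hne
            · exact Finset.Subset.refl D
            · exact absurd (Finset.ssubset_iff_subset_ne.2 ⟨h, hne⟩) hnss
          · exact Or.inl h
          · exact Or.inr h.symm
        · obtain ⟨x, hx, rfl⟩ := Finset.mem_image.1 hDx
          by_cases hxC : x ∈ C
          · exfalso
            apply hnss
            refine Finset.ssubset_iff_subset_ne.2 ⟨Finset.singleton_subset_iff.2 hxC, ?_⟩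
            intro h
            have := h2 C hC
            rw [← h, Finset.card_singleton] at this
            omega
          · exact Or.inr (Finset.disjoint_singleton_right.2 hxC)
      have hinj : ∀ C1 ∈ S', ∀ C2 ∈ S',
          (if D ⊂ C1 then insert v C1 else C1) = (if D ⊂ C2 then insert v C2 else C2) →
          C1 = C2 := by
        intro C1 h1 C2 h2' heq
        by_cases ha1 : D ⊂ C1 <;> by_cases ha2 : D ⊂ C2 <;>
          simp only [ha1, ha2, if_pos, if_neg, if_true, if_false] at heq
        · rw [← Finset.erase_insert (hvC C1 h1), heq, Finset.erase_insert (hvC C2 h2')]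
        · exact absurd (heq ▸ Finset.mem_insert_self v C1) (hvC C2 h2')
        · exact absurd (heq ▸ Finset.mem_insert_self v C2) (hvC C1 h1)
        · exact heq
      have hnewNot : insert v D ∉ S'.image (fun C => if D ⊂ C then insert v C else C) := by
        intro hmem
        obtain ⟨C, hC, hCeq⟩ := Finset.mem_image.1 hmem
        by_cases ha : D ⊂ C
        · rw [if_pos ha] at hCeq
          have : C = D := by
            rw [← Finset.erase_insert (hvC C hC), hCeq, Finset.erase_insert hvD]
          exact absurd (this ▸ ha) (ssubset_irrefl D)
        · rw [if_neg ha] at hCeq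
          exact hvC C hC (hCeq ▸ Finset.mem_insert_self v D)
      have hMnew : minAt v (insert (insert v D)
          (S'.image (fun C => if D ⊂ C then insert v C else C))) = insert v D := by
        apply minAt_eq
        · exact Finset.mem_insert_self _ _
        · exact Finset.mem_insert_self v D
        · intro B hB hvB
          rcases Finset.mem_insert.1 hB with rfl | hB
          · exact Finset.Subset.refl _
          · obtain ⟨C, hC, rfl⟩ := Finset.mem_image.1 hB
            by_cases ha : D ⊂ C
            · rw [if_pos ha] at hvB ⊢
              exact Finset.insert_subset_insert v ha.subset
            · rw [if_neg ha] at hvB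
              exact absurd hvB (hvC C hC)
      rw [Finset.mem_coe, Finset.mem_filter]
      constructor
      · rw [mem_nestedF]
        refine ⟨?_, ?_, ?_, ?_, ?_⟩
        · intro B hB
          rcases Finset.mem_insert.1 hB with rfl | hB
          · exact Finset.insert_subset hvtop (hDsub.trans hIccSub)
          · obtain ⟨C, hC, rfl⟩ := Finset.mem_image.1 hB
            by_cases ha : D ⊂ C
            · rw [if_pos ha]
              exact Finset.insert_subset hvtop ((hsub C hC).trans hIccSub)
            · rw [if_neg ha]
              exact (hsub C hC).trans hIccSub
        · rw [Finset.card_insert_of_notMem hnewNot,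
            Finset.card_image_of_injOn (fun C1 h1 C2 h2' => hinj C1 h1 C2 h2'), hcard]
          omega
        · by_cases hDtop : D = Icc 1 n
          · rw [← hInsIcc, ← hDtop]
            exact Finset.mem_insert_self _ _
          · refine Finset.mem_insert_of_mem (Finset.mem_image.2 ⟨Icc 1 n, htop, ?_⟩)
            rw [if_pos (Finset.ssubset_iff_subset_ne.2 ⟨hDsub, hDtop⟩), hInsIcc]
        · intro B hB
          rcases Finset.mem_insert.1 hB with rfl | hB
          · rw [Finset.card_insert_of_notMem hvD]
            have := Finset.card_pos.2 hDne
            omega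
          · obtain ⟨C, hC, rfl⟩ := Finset.mem_image.1 hB
            by_cases ha : D ⊂ C
            · rw [if_pos ha, Finset.card_insert_of_notMem (hvC C hC)]
              have := h2 C hC; omega
            · rw [if_neg ha]; exact h2 C hC
        · intro B1 hB1 B2 hB2
          rcases Finset.mem_insert.1 hB1 with rfl | hB1 <;>
            rcases Finset.mem_insert.1 hB2 with rfl | hB2
          · exact Or.inl (Finset.Subset.refl _)
          · obtain ⟨C, hC, rfl⟩ := Finset.mem_image.1 hB2
            by_cases ha : D ⊂ C
            · rw [if_pos ha]
              exact Or.inl (Finset.insert_subset_insert v ha.subset)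
            · rw [if_neg ha]
              rcases hrel C hC ha with h | h
              · exact Or.inr (Or.inl (h.trans (Finset.subset_insert v D)))
              · exact Or.inr (Or.inr (Finset.disjoint_insert_left.2 ⟨hvC C hC, h.symm⟩))
          · obtain ⟨C, hC, rfl⟩ := Finset.mem_image.1 hB1
            by_cases ha : D ⊂ C
            · rw [if_pos ha]
              exact Or.inr (Or.inl (Finset.insert_subset_insert v ha.subset))
            · rw [if_neg ha]
              rcases hrel C hC ha with h | h
              · exact Or.inl (h.trans (Finset.subset_insert v D))
              · exact Or.inr (Or.inr (Finset.disjoint_insert_right.2 ⟨hvC C hC, h⟩))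
          · obtain ⟨C1, h1, rfl⟩ := Finset.mem_image.1 hB1
            obtain ⟨C2, h2', rfl⟩ := Finset.mem_image.1 hB2
            by_cases ha1 : D ⊂ C1 <;> by_cases ha2 : D ⊂ C2
            · rw [if_pos ha1, if_pos ha2]
              obtain ⟨x, hx⟩ := hDne
              rcases hlam C1 h1 C2 h2' with h | h | h
              · exact Or.inl (Finset.insert_subset_insert v h)
              · exact Or.inr (Or.inl (Finset.insert_subset_insert v h))
              · exact absurd (ha2.subset hx) (Finset.disjoint_left.1 h (ha1.subset hx))
            · rw [if_pos ha1, if_neg ha2]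
              rcases hlam C1 h1 C2 h2' with h | h | h
              · exact absurd (ha1.trans_subset h) ha2
              · exact Or.inr (Or.inl (h.trans (Finset.subset_insert v C1)))
              · exact Or.inr (Or.inr (Finset.disjoint_insert_left.2 ⟨hvC C2 h2', h⟩))
            · rw [if_neg ha1, if_pos ha2]
              rcases hlam C1 h1 C2 h2' with h | h | h
              · exact Or.inl (h.trans (Finset.subset_insert v C2))
              · exact absurd (ha2.trans_subset h) ha1
              · exact Or.inr (Or.inr (Finset.disjoint_insert_right.2 ⟨hvC C1 h1, h⟩))
            · rw [if_neg ha1, if_neg ha2]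
              exact hlam C1 h1 C2 h2'
      · rw [hMnew, Finset.erase_insert hvD]
        intro hcon
        obtain ⟨h3, hno⟩ := hcon
        rcases hD with hDS' | hDx
        · apply hno
          refine Finset.mem_insert_of_mem (Finset.mem_image.2 ⟨D, hDS', ?_⟩)
          rw [if_neg (ssubset_irrefl D)]
        · obtain ⟨x, hx, rfl⟩ := Finset.mem_image.1 hDx
          rw [Finset.card_insert_of_notMem hvD, Finset.card_singleton] at h3
          omega
    · -- left_inv
      intro S hS
      rw [Finset.mem_coe, Finset.mem_filter] at hS
      obtain ⟨hSmem, hnc⟩ := hS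
      push_neg at hnc
      rw [mem_nestedF] at hSmem
      obtain ⟨hsub, hcard, htop, h2, hlam⟩ := hSmem
      obtain ⟨hM, hvM, hMmin⟩ := minAt_spec hlam htop hvtop
      set M := minAt v S with hMdef
      have hM2 : 2 ≤ M.card := h2 M hM
      have hMne : (M.erase v).Nonempty := by
        rw [← Finset.card_pos, Finset.card_erase_of_mem hvM]; omega
      simp only
      rw [Finset.image_image, Finset.insert_erase hvM]
      have hpt : ∀ B ∈ S.erase M,
          ((fun C => if M.erase v ⊂ C then insert v C else C) ∘ (fun B => B.erase v)) B = B := by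
        intro B hB
        simp only [Function.comp_apply]
        have hBS := Finset.mem_of_mem_erase hB
        have hBM := Finset.ne_of_mem_erase hB
        by_cases hvB : v ∈ B
        · have hss : M.erase v ⊂ B.erase v := by
            refine Finset.ssubset_iff_subset_ne.2
              ⟨Finset.erase_subset_erase v (hMmin B hBS hvB), ?_⟩
            intro h
            apply hBM
            rw [← Finset.insert_erase hvB, ← h, Finset.insert_erase hvM]
          rw [if_pos hss, Finset.insert_erase hvB]
        · rw [Finset.erase_eq_of_notMem hvB]
          have hns : ¬ M.erase v ⊂ B := by
            intro hss
            rcases hlam B hBS M hM with h | h | h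
            · have hBMe : B ⊆ M.erase v := fun x hx =>
                Finset.mem_erase.2 ⟨fun hxv => hvB (hxv ▸ hx), h hx⟩
              exact absurd (hss.trans_subset hBMe) (ssubset_irrefl _)
            · exact hvB (h hvM)
            · obtain ⟨x, hx⟩ := hMne
              exact Finset.disjoint_left.1 h (hss.subset hx) (Finset.mem_of_mem_erase hx)
          rw [if_neg hns]
      have himg : (S.erase M).image
          ((fun C => if M.erase v ⊂ C then insert v C else C) ∘ (fun B => B.erase v))
          = S.erase M := by
        ext B
        constructor
        · intro hB
          obtain ⟨C, hC, hCB⟩ := Finset.mem_image.1 hB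
          rw [hpt C hC] at hCB
          exact hCB ▸ hC
        · intro hB
          exact Finset.mem_image.2 ⟨B, hB, hpt B hB⟩
      rw [himg, Finset.insert_erase hM]
    · -- right_inv
      intro q hq
      rw [Finset.mem_coe, mem_pairs] at hq
      obtain ⟨S', D⟩ := q
      simp only at hq ⊢
      obtain ⟨hS', hD⟩ := hq
      rw [mem_nestedF] at hS'
      obtain ⟨hsub, hcard, htop, h2, hlam⟩ := hS'
      have hvC : ∀ C ∈ S', v ∉ C := fun C hC h => hvn (hsub C hC h)
      rw [Finset.mem_union] at hD
      have hDsub : D ⊆ Icc 1 n := by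
        rcases hD with hD | hD
        · exact hsub D hD
        · obtain ⟨x, hx, rfl⟩ := Finset.mem_image.1 hD
          exact Finset.singleton_subset_iff.2 hx
      have hvD : v ∉ D := fun h => hvn (hDsub h)
      have hnewNot : insert v D ∉ S'.image (fun C => if D ⊂ C then insert v C else C) := by
        intro hmem
        obtain ⟨C, hC, hCeq⟩ := Finset.mem_image.1 hmem
        by_cases ha : D ⊂ C
        · rw [if_pos ha] at hCeq
          have : C = D := by
            rw [← Finset.erase_insert (hvC C hC), hCeq, Finset.erase_insert hvD]
          exact absurd (this ▸ ha) (ssubset_irrefl D)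
        · rw [if_neg ha] at hCeq
          exact hvC C hC (hCeq ▸ Finset.mem_insert_self v D)
      have hMnew : minAt v (insert (insert v D)
          (S'.image (fun C => if D ⊂ C then insert v C else C))) = insert v D := by
        apply minAt_eq
        · exact Finset.mem_insert_self _ _
        · exact Finset.mem_insert_self v D
        · intro B hB hvB
          rcases Finset.mem_insert.1 hB with rfl | hB
          · exact Finset.Subset.refl _
          · obtain ⟨C, hC, rfl⟩ := Finset.mem_image.1 hB
            by_cases ha : D ⊂ C
            · rw [if_pos ha] at hvB ⊢
              exact Finset.insert_subset_insert v ha.subset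
            · rw [if_neg ha] at hvB
              exact absurd hvB (hvC C hC)
      rw [hMnew, Finset.erase_insert hvD, Finset.erase_insert hnewNot, Finset.image_image]
      have hpt : ∀ C ∈ S',
          ((fun B => B.erase v) ∘ (fun C => if D ⊂ C then insert v C else C)) C = C := by
        intro C hC
        simp only [Function.comp_apply]
        by_cases ha : D ⊂ C
        · rw [if_pos ha, Finset.erase_insert (hvC C hC)]
        · rw [if_neg ha, Finset.erase_eq_of_notMem (hvC C hC)]
      have himg : S'.image
          ((fun B => B.erase v) ∘ (fun C => if D ⊂ C then insert v C else C)) = S' := by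
        ext B
        constructor
        · intro hB
          obtain ⟨C, hC, hCB⟩ := Finset.mem_image.1 hB
          rw [hpt C hC] at hCB
          exact hCB ▸ hC
        · intro hB
          exact Finset.mem_image.2 ⟨B, hB, hpt B hB⟩
      rw [himg]
  have hI2 : (pairs (nestedF (Icc 1 n) k) (fun S => S)).card
      = k * (nestedF (Icc 1 n) k).card := by
    rw [card_pairs,
      Finset.sum_congr rfl (fun S hS => (mem_nestedF.1 hS).2.1),
      Finset.sum_const, smul_eq_mul, mul_comm]
  have hII2 : (pairs (nestedF (Icc 1 n) (k-1))
      (fun S' => S' ∪ (Icc 1 n).image (fun x => {x}))).card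
      = (n + k - 1) * (nestedF (Icc 1 n) (k-1)).card := by
    rw [card_pairs]
    have heach : ∀ S' ∈ nestedF (Icc 1 n) (k-1),
        (S' ∪ (Icc 1 n).image (fun x => ({x} : Finset ℕ))).card = (k-1) + n := by
      intro S' hS'
      rw [mem_nestedF] at hS'
      have hdisj : Disjoint S' ((Icc 1 n).image (fun x => ({x} : Finset ℕ))) := by
        rw [Finset.disjoint_right]
        intro A hA hA'
        obtain ⟨x, hx, rfl⟩ := Finset.mem_image.1 hA
        have := hS'.2.2.2.1 _ hA'
        rw [Finset.card_singleton] at this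
        omega
      rw [Finset.card_union_of_disjoint hdisj, hS'.2.1,
        Finset.card_image_of_injective _ (fun a b h => by
          simpa using Finset.singleton_injective h), Nat.card_Icc]
      omega
    rw [Finset.sum_congr rfl heach, Finset.sum_const, smul_eq_mul, mul_comm]
    congr 1
    omega
  rw [hCaseI, hI2, hCaseII, hII2]


lemma main_count : ∀ n k : ℕ, 2 ≤ n → 1 ≤ k →
    (nestedF (Icc 1 n) k).card = (partF (Icc 1 (n + k - 1)) k).card := by
  intro n
  induction n using Nat.strong_induction_on with
  | _ n IH =>
    intro k hn hk
    rcases eq_or_lt_of_le hk with hk1 | hk2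
    · -- k = 1
      rw [← hk1]
      have h1 : n + 1 - 1 = n := by omega
      rw [h1, nestedF_base hn, partF_base hn]
    · -- k ≥ 2
      by_cases hbig : n ≤ k
      · -- both sides are zero
        have hL : nestedF (Icc 1 n) k = ∅ := by
          rw [Finset.eq_empty_iff_forall_notMem]
          intro S hS
          rw [mem_nestedF] at hS
          obtain ⟨hsub, hcard, htop, h2, hlam⟩ := hS
          have := laminar_card_bound S (Icc 1 n) hsub h2 hlam ⟨_, htop⟩
          rw [Nat.card_Icc] at this
          omega
        have hR : partF (Icc 1 (n + k - 1)) k = ∅ := by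
          rw [Finset.eq_empty_iff_forall_notMem]
          intro P hP
          have := part_card_bound hP
          rw [Nat.card_Icc] at this
          omega
        rw [hL, hR]
      · push_neg at hbig
        -- k + 1 ≤ n, k ≥ 2, n ≥ 3
        have hn3 : 3 ≤ n := by omega
        obtain ⟨n', rfl⟩ : ∃ n', n = n' + 1 := ⟨n - 1, by omega⟩
        have hn' : 2 ≤ n' := by omega
        rw [nested_rec n' k hn' hk]
        have e1 : (nestedF (Icc 1 n') k).card = (partF (Icc 1 (n' + k - 1)) k).card :=
          IH n' (by omega) k hn' hk
        have e2 : (nestedF (Icc 1 n') (k-1)).card = (partF (Icc 1 (n' + (k-1) - 1)) (k-1)).card :=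
          IH n' (by omega) (k-1) hn' (by omega)
        rw [e1, e2]
        have hm : n' + 1 + k - 1 = (n' + k - 1) + 1 := by omega
        rw [hm, part_rec (n' + k - 1) k (by omega) hk]
        have h3 : n' + k - 1 - 1 = n' + (k-1) - 1 := by omega
        have h4 : n' + k - 1 = n' + 1 + k - 1 - 1 := by omega
        rw [h3]

def IsNested2 (n k : ℕ) (S : Finset (Finset ℕ)) : Prop :=
  S.card = k ∧ Finset.Icc 1 n ∈ S ∧
  (∀ A ∈ S, A ⊆ Finset.Icc 1 n ∧ 2 ≤ A.card) ∧
  (∀ A ∈ S, ∀ B ∈ S, A ⊆ B ∨ B ⊆ A ∨ Disjoint A B)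

def IsPart2 (m k : ℕ) (P : Finset (Finset ℕ)) : Prop :=
  P.card = k ∧ (∀ A ∈ P, 2 ≤ A.card) ∧
  (∀ A ∈ P, ∀ B ∈ P, A ≠ B → Disjoint A B) ∧
  P.biUnion id = Finset.Icc 1 m

theorem stmt1 (n k : ℕ) (hn : 2 ≤ n) (hk1 : 1 ≤ k) (hk : k ≤ n - 1) :
    Nat.card {S : Finset (Finset ℕ) // IsNested2 n k S} =
      Nat.card {P : Finset (Finset ℕ) // IsPart2 (n + k - 1) k P} := by
  have e1 : Nat.card {S : Finset (Finset ℕ) // IsNested2 n k S} = (nestedF (Icc 1 n) k).card := by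
    rw [← Nat.card_eq_finsetCard]
    apply Nat.card_congr
    apply Equiv.subtypeEquivRight
    intro S
    rw [mem_nestedF, IsNested2]
    constructor
    · rintro ⟨h1, h2, h3, h4⟩
      exact ⟨fun A hA => (h3 A hA).1, h1, h2, fun A hA => (h3 A hA).2, h4⟩
    · rintro ⟨h0, h1, h2, h3, h4⟩
      exact ⟨h1, h2, fun A hA => ⟨h0 A hA, h3 A hA⟩, h4⟩
  have e2 : Nat.card {P : Finset (Finset ℕ) // IsPart2 (n + k - 1) k P} =
      (partF (Icc 1 (n + k - 1)) k).card := by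
    rw [← Nat.card_eq_finsetCard]
    apply Nat.card_congr
    apply Equiv.subtypeEquivRight
    intro P
    rw [mem_partF, IsPart2]
    constructor
    · rintro ⟨h1, h2, h3, h4⟩
      refine ⟨fun A hA => ?_, h1, h2, h3, h4⟩
      rw [← h4]
      exact fun x hx => Finset.mem_biUnion.2 ⟨A, hA, hx⟩
    · rintro ⟨h0, h1, h2, h3, h4⟩
      exact ⟨h1, h2, h3, h4⟩
  rw [e1, e2, main_count n k hn hk1]
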